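/- Quantum bound for the contextuality witness: let H be a complex Hilbert space, let A₁₂, A₃₄, A₅₆, A₄₅, A₁₆, A₂₃ : H →L[ℂ] H be self-adjoint operators each squaring to the identity, and let Ψ ∈ H be a unit vector. Then re⟪Ψ, A₁₂(A₃₄(A₅₆ Ψ))⟫ + re⟪Ψ, A₄₅(A₁₆(A₂₃ Ψ))⟫ + re⟪Ψ, A₁₂(A₄₅ Ψ)⟫ + re⟪Ψ, A₃₄(A₁₆ Ψ)⟫ − re⟪Ψ, A₅₆(A₂₃ Ψ)⟫ ≤ 5. -/
import Mathlib


open scoped InnerProductSpace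

private lemma norm_apply_eq {H : Type*} [NormedAddCommGroup H] [InnerProductSpace ℂ H]
    [CompleteSpace H] (A : H →L[ℂ] H) (h : IsSelfAdjoint A) (hi : A ∘L A = 1) (x : H) :
    ‖A x‖ = ‖x‖ := by
  have hAA : A (A x) = x := by
    have := congrArg (fun T : H →L[ℂ] H => T x) hi
    simpa using this
  have h1 : (⟪A x, A x⟫_ℂ) = ⟪x, x⟫_ℂ := by
    calc (⟪A x, A x⟫_ℂ) = ⟪x, A (A x)⟫_ℂ := by
          nth_rewrite 1 [← h.adjoint_eq]
          exact ContinuousLinearMap.adjoint_inner_left A (A x) x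
      _ = ⟪x, x⟫_ℂ := by rw [hAA]
  have h2 : ‖A x‖ ^ 2 = ‖x‖ ^ 2 := by
    rw [← @inner_self_eq_norm_sq ℂ, ← @inner_self_eq_norm_sq ℂ, h1]
  nlinarith [norm_nonneg (A x), norm_nonneg x]

private lemma term_le {H : Type*} [NormedAddCommGroup H] [InnerProductSpace ℂ H]
    (Ψ x : H) (hΨ : ‖Ψ‖ = 1) (hx : ‖x‖ = 1) : (⟪Ψ, x⟫_ℂ).re ≤ 1 := by
  have := re_inner_le_norm (𝕜 := ℂ) Ψ x
  rw [hΨ, hx] at this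
  simpa using this

/-- **Quantum bound for the contextuality witness.** For any Hermitian involutions
`A₁₂, A₃₄, A₅₆, A₄₅, A₁₆, A₂₃` on a complex Hilbert space and any unit vector `Ψ`, the
expectation of the witness `W = A₁₂A₃₄A₅₆ + A₄₅A₁₆A₂₃ + A₁₂A₄₅ + A₃₄A₁₆ − A₅₆A₂₃` in the
state `Ψ` is at most `5`. -/
theorem quantum_bound_contextuality_witness
    {H : Type*} [NormedAddCommGroup H] [InnerProductSpace ℂ H] [CompleteSpace H]
    (A₁₂ A₃₄ A₅₆ A₄₅ A₁₆ A₂₃ : H →L[ℂ] H)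
    (h₁₂ : IsSelfAdjoint A₁₂) (h₃₄ : IsSelfAdjoint A₃₄) (h₅₆ : IsSelfAdjoint A₅₆)
    (h₄₅ : IsSelfAdjoint A₄₅) (h₁₆ : IsSelfAdjoint A₁₆) (h₂₃ : IsSelfAdjoint A₂₃)
    (hi₁₂ : A₁₂ ∘L A₁₂ = 1) (hi₃₄ : A₃₄ ∘L A₃₄ = 1) (hi₅₆ : A₅₆ ∘L A₅₆ = 1)
    (hi₄₅ : A₄₅ ∘L A₄₅ = 1) (hi₁₆ : A₁₆ ∘L A₁₆ = 1) (hi₂₃ : A₂₃ ∘L A₂₃ = 1)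
    (Ψ : H) (hΨ : ‖Ψ‖ = 1) :
    (⟪Ψ, A₁₂ (A₃₄ (A₅₆ Ψ))⟫_ℂ).re + (⟪Ψ, A₄₅ (A₁₆ (A₂₃ Ψ))⟫_ℂ).re +
      (⟪Ψ, A₁₂ (A₄₅ Ψ)⟫_ℂ).re + (⟪Ψ, A₃₄ (A₁₆ Ψ)⟫_ℂ).re -
      (⟪Ψ, A₅₆ (A₂₃ Ψ)⟫_ℂ).re ≤ 5 := by
  have n₁₂ := norm_apply_eq A₁₂ h₁₂ hi₁₂
  have n₃₄ := norm_apply_eq A₃₄ h₃₄ hi₃₄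
  have n₅₆ := norm_apply_eq A₅₆ h₅₆ hi₅₆
  have n₄₅ := norm_apply_eq A₄₅ h₄₅ hi₄₅
  have n₁₆ := norm_apply_eq A₁₆ h₁₆ hi₁₆
  have n₂₃ := norm_apply_eq A₂₃ h₂₃ hi₂₃
  have t1 : (⟪Ψ, A₁₂ (A₃₄ (A₅₆ Ψ))⟫_ℂ).re ≤ 1 :=
    term_le Ψ _ hΨ (by rw [n₁₂, n₃₄, n₅₆, hΨ])
  have t2 : (⟪Ψ, A₄₅ (A₁₆ (A₂₃ Ψ))⟫_ℂ).re ≤ 1 :=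
    term_le Ψ _ hΨ (by rw [n₄₅, n₁₆, n₂₃, hΨ])
  have t3 : (⟪Ψ, A₁₂ (A₄₅ Ψ)⟫_ℂ).re ≤ 1 :=
    term_le Ψ _ hΨ (by rw [n₁₂, n₄₅, hΨ])
  have t4 : (⟪Ψ, A₃₄ (A₁₆ Ψ)⟫_ℂ).re ≤ 1 :=
    term_le Ψ _ hΨ (by rw [n₃₄, n₁₆, hΨ])
  have t5 : -(⟪Ψ, A₅₆ (A₂₃ Ψ)⟫_ℂ).re ≤ 1 := by
    have := re_inner_le_norm (𝕜 := ℂ) Ψ (A₅₆ (A₂₃ Ψ))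
    have habs := norm_inner_le_norm (𝕜 := ℂ) Ψ (A₅₆ (A₂₃ Ψ))
    have h1 : ‖(⟪Ψ, A₅₆ (A₂₃ Ψ)⟫_ℂ)‖ ≤ 1 := by
      rw [hΨ, n₅₆, n₂₃, hΨ] at habs; simpa using habs
    have := (abs_le.mp (le_trans (Complex.abs_re_le_norm _) h1)).1
    linarith
  linarith
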